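/- arXiv:1511.00446 — 5 statements merged into one kernel-verified Lean document; each statement's English description precedes it below -/
import Mathlib

section
/- Let a, ξ, P_const > 0 with a·P_const/ξ ≥ 1 (wlog the argument of W₀ is ≥ -1/e). Then P* = (1/a)·(exp(1 + W₀((a·P_const/ξ - 1)/e)) - 1) satisfies the stationarity equation a·(ξ·P* + P_const) = ξ·s·log s with s = 1 + a·P*, where W₀ is the principal branch of the Lambert W function. -/
/-- The closed-form saturation power for the EE upper bound solves the
stationarity equation.  `W0` is any function acting as the principal branch of
the Lambert W function, i.e. the inverse of `x ↦ x·exp x` on `[-1, ∞)`. -/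
theorem saturation_power_UB_closed_form (a ξ Pconst : ℝ)
    (ha : 0 < a) (hξ : 0 < ξ) (hPc : 0 < Pconst)
    (hcond : a * Pconst / ξ ≥ 1)
    (W0 : ℝ → ℝ) (hW0 : ∀ x : ℝ, -1 ≤ x → W0 (x * Real.exp x) = x) :
    let Pstar : ℝ :=
      (1 / a) * (Real.exp (1 + W0 ((a * Pconst / ξ - 1) / Real.exp 1)) - 1)
    let s : ℝ := 1 + a * Pstar
    a * (ξ * Pstar + Pconst) = ξ * s * Real.log s := by
  intro Pstar s
  set y : ℝ := (a * Pconst / ξ - 1) / Real.exp 1 with hy_def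
  have hy0 : 0 ≤ y := div_nonneg (by linarith) (Real.exp_pos 1).le
  -- existence of w ≥ 0 with w * exp w = y, by IVT on [0, y]
  have hcont : ContinuousOn (fun x : ℝ => x * Real.exp x) (Set.Icc 0 y) :=
    (continuous_id.mul Real.continuous_exp).continuousOn
  have hIVT := intermediate_value_Icc hy0 hcont
  have hmem : y ∈ Set.Icc ((fun x : ℝ => x * Real.exp x) 0)
      ((fun x : ℝ => x * Real.exp x) y) := by
    constructor
    · simpa using hy0
    · simpa using le_mul_of_one_le_right hy0 (Real.one_le_exp hy0)
  obtain ⟨w, hwmem, hw'⟩ := hIVT hmem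
  have hw : w * Real.exp w = y := hw'
  have hw0 : 0 ≤ w := hwmem.1
  have hW : W0 y = w := by rw [← hw]; exact hW0 w (by linarith)
  have hs : s = Real.exp (1 + w) := by
    simp only [s, Pstar, ← hy_def, hW]
    field_simp
    ring
  have hlog : Real.log s = 1 + w := by rw [hs, Real.log_exp]
  have hexp : Real.exp (1 + w) = Real.exp 1 * Real.exp w := Real.exp_add 1 w
  have hyeq : w * Real.exp w * Real.exp 1 = a * Pconst / ξ - 1 := by
    rw [hw, hy_def]
    field_simp
  have hPstar : a * Pstar = Real.exp (1 + w) - 1 := by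
    simp only [Pstar, ← hy_def, hW]
    field_simp
  have hξne : (ξ : ℝ) ≠ 0 := hξ.ne'
  have hPc' : a * Pconst / ξ - 1 = w * Real.exp w * Real.exp 1 := hyeq.symm
  have haPc : a * Pconst = ξ * (w * Real.exp w * Real.exp 1 + 1) := by
    field_simp at hPc'
    linarith
  rw [hlog]
  have : a * (ξ * Pstar) = ξ * (a * Pstar) := by ring
  rw [mul_add, this, hPstar, haPc, hs, hexp]
  ring
end

section
/- Define EE(P) = log(1+P)/(P + P_static) for P > 0 with P_static > 0. Then EE attains its unique maximum over P > 0 at P_EE = exp(W₀((P_static - 1)/e) + 1) - 1. -/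
/-- The single-link energy efficiency `EE(P) = log(1+P)/(P + P_static)`
attains its unique maximum over `P > 0` at
`P_EE = exp (W₀((P_static - 1)/e) + 1) - 1`. -/
theorem single_link_EE_unique_max (Pstatic : ℝ) (hPs : 0 < Pstatic)
    (W0 : ℝ → ℝ) (hW0 : ∀ x : ℝ, -1 ≤ x → W0 (x * Real.exp x) = x) :
    let EE : ℝ → ℝ := fun P => Real.log (1 + P) / (P + Pstatic)
    let PEE : ℝ := Real.exp (W0 ((Pstatic - 1) / Real.exp 1) + 1) - 1
    ∀ P : ℝ, 0 < P → EE P ≤ EE PEE ∧ (EE P = EE PEE → P = PEE) := by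
  intro EE PEE P hP
  have he : (0:ℝ) < Real.exp 1 := Real.exp_pos 1
  -- existence of x ≥ -1 with x * exp x = (Pstatic - 1)/e
  obtain ⟨x, hxmem, hxeq⟩ : ∃ x ∈ Set.Icc (-1 : ℝ) Pstatic,
      x * Real.exp x = (Pstatic - 1) / Real.exp 1 := by
    have hcont : ContinuousOn (fun x : ℝ => x * Real.exp x) (Set.Icc (-1) Pstatic) :=
      (continuous_id.mul Real.continuous_exp).continuousOn
    have h1 : (-1 : ℝ) ≤ Pstatic := by linarith
    apply intermediate_value_Icc h1 hcont
    constructor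
    · rw [Real.exp_neg, le_div_iff₀ he]
      have hinv : Real.exp 1 * (Real.exp 1)⁻¹ = 1 := mul_inv_cancel₀ (ne_of_gt he)
      nlinarith
    · rw [div_le_iff₀ he]
      have hA : (1:ℝ) ≤ Real.exp Pstatic * Real.exp 1 := by
        nlinarith [Real.one_le_exp hPs.le, Real.one_le_exp (zero_le_one (α := ℝ))]
      nlinarith [mul_le_mul_of_nonneg_left hA hPs.le]
  have hx1 : -1 ≤ x := hxmem.1
  have hW : W0 ((Pstatic - 1) / Real.exp 1) = x := by rw [← hxeq, hW0 x hx1]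
  set t : ℝ := x + 1 with ht
  have hxne : x ≠ -1 := by
    intro h
    rw [h] at hxeq
    rw [Real.exp_neg, neg_one_mul] at hxeq
    field_simp at hxeq
    nlinarith [Real.exp_ne_zero 1]
  have ht0 : 0 < t := by
    rcases lt_or_eq_of_le hx1 with h | h
    · simp only [ht]; linarith
    · exact absurd h.symm hxne
  -- key relation: (t - 1) * exp t = Pstatic - 1
  have hkey : (t - 1) * Real.exp t = Pstatic - 1 := by
    have h1 : x * Real.exp x * Real.exp 1 = Pstatic - 1 := by
      rw [hxeq]; field_simp
    rw [mul_assoc, ← Real.exp_add] at h1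
    have ht' : x + 1 = t := rfl
    rw [ht'] at h1
    simpa [ht] using h1
  have hPEE : PEE = Real.exp t - 1 := by simp [PEE, hW, ht]
  have hexpt : 1 < Real.exp t := by
    have := Real.exp_lt_exp.mpr ht0
    simpa using this
  have hPEEpos : 0 < PEE := by rw [hPEE]; linarith
  set s : ℝ := Real.log (1 + P) with hs
  have h1P : (0:ℝ) < 1 + P := by linarith
  have hes : Real.exp s = 1 + P := Real.exp_log h1P
  have hlogPEE : Real.log (1 + PEE) = t := by
    rw [hPEE]
    have h1 : 1 + (Real.exp t - 1) = Real.exp t := by ring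
    rw [h1, Real.log_exp]
  have hd1 : 0 < P + Pstatic := by linarith
  have hd2 : 0 < PEE + Pstatic := by linarith
  have hexp_ineq : 1 + (s - t) ≤ Real.exp (s - t) := by
    have := Real.add_one_le_exp (s - t); linarith
  have h3 : t * Real.exp s = t * (Real.exp t * Real.exp (s - t)) := by
    rw [← Real.exp_add]; ring_nf
  have hPs' : Pstatic = (t - 1) * Real.exp t + 1 := by linarith [hkey]
  have hP' : P = Real.exp s - 1 := by linarith [hes]
  have hEEP : EE P = s / (P + Pstatic) := rfl
  have hEEQ : EE PEE = t / (PEE + Pstatic) := by simp [EE, hlogPEE]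
  have h2 : t * Real.exp t * (1 + (s - t)) ≤ t * Real.exp t * Real.exp (s - t) := by
    have hpos : 0 < t * Real.exp t := mul_pos ht0 (Real.exp_pos t)
    exact mul_le_mul_of_nonneg_left hexp_ineq (le_of_lt hpos)
  have hmain : s * (PEE + Pstatic) ≤ t * (P + Pstatic) := by
    rw [hPEE, hPs', hP']
    nlinarith [h2, h3]
  constructor
  · rw [hEEP, hEEQ, div_le_div_iff₀ hd1 hd2]
    exact hmain
  · intro heq
    rw [hEEP, hEEQ, div_eq_div_iff hd1.ne' hd2.ne'] at heq
    have hst : s = t := by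
      by_contra hne
      have hlt : 1 + (s - t) < Real.exp (s - t) := by
        have := Real.add_one_lt_exp (x := s - t) (by intro h; apply hne; linarith)
        linarith
      have h2' : t * Real.exp t * (1 + (s - t)) < t * Real.exp t * Real.exp (s - t) := by
        have hpos : 0 < t * Real.exp t := mul_pos ht0 (Real.exp_pos t)
        exact mul_lt_mul_of_pos_left hlt hpos
      rw [hPEE, hPs', hP'] at heq
      nlinarith [h2', h3]
    have hfin : (1:ℝ) + P = 1 + PEE := by
      rw [← hes, hst, hPEE]; ring
    linarith
end

section
/- Define EE(P) = log(1+P)/(P + P_static) with P_static > 0. Then EE is strictly increasing on (0, P_EE) and strictly decreasing on (P_EE, ∞), where P_EE is the unique positive solution of (P + P_static)/(1+P) = log(1+P). -/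
private lemma hasDerivAt_log1p (x : ℝ) (hx : (0:ℝ) < 1 + x) :
    HasDerivAt (fun P : ℝ => Real.log (1 + P)) (1 / (1 + x)) x := by
  have h1 : HasDerivAt (fun P : ℝ => 1 + P) 1 x := by
    simpa using (hasDerivAt_id x).const_add 1
  exact ((Real.hasDerivAt_log hx.ne').comp x h1).congr_deriv (by simp)

private lemma hasDerivAt_g (Pstatic x : ℝ) (hx : (0:ℝ) < 1 + x) :
    HasDerivAt (fun P : ℝ => (P + Pstatic) / (1 + P) - Real.log (1 + P))
      (-((Pstatic + x) / (1 + x) ^ 2)) x := by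
  have h1 : HasDerivAt (fun P : ℝ => P + Pstatic) 1 x := by
    simpa using (hasDerivAt_id x).add_const Pstatic
  have h2 : HasDerivAt (fun P : ℝ => 1 + P) 1 x := by
    simpa using (hasDerivAt_id x).const_add 1
  have hdiv := h1.div h2 hx.ne'
  have := hdiv.sub (hasDerivAt_log1p x hx)
  refine this.congr_deriv ?_
  field_simp
  ring

private lemma hasDerivAt_EE (Pstatic x : ℝ) (hPs : 0 < Pstatic) (hx : 0 < x) :
    HasDerivAt (fun P : ℝ => Real.log (1 + P) / (P + Pstatic))
      (((x + Pstatic) / (1 + x) - Real.log (1 + x)) / (x + Pstatic) ^ 2) x := by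
  have hx1 : (0:ℝ) < 1 + x := by linarith
  have hden : x + Pstatic ≠ 0 := by positivity
  have h1 : HasDerivAt (fun P : ℝ => P + Pstatic) 1 x := by
    simpa using (hasDerivAt_id x).add_const Pstatic
  have := (hasDerivAt_log1p x hx1).div h1 hden
  refine this.congr_deriv ?_
  ring

/-- `EE(P) = log(1+P)/(P + P_static)` is strictly increasing on `(0, P_EE)`
and strictly decreasing on `(P_EE, ∞)`, where `P_EE` is the unique positive
solution of `(P + P_static)/(1+P) = log (1+P)`. -/
theorem single_link_EE_quasiconcave (Pstatic : ℝ) (hPs : 0 < Pstatic)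
    (PEE : ℝ) (hPEE : 0 < PEE)
    (heq : (PEE + Pstatic) / (1 + PEE) = Real.log (1 + PEE))
    (huniq : ∀ P : ℝ, 0 < P →
      (P + Pstatic) / (1 + P) = Real.log (1 + P) → P = PEE) :
    let EE : ℝ → ℝ := fun P => Real.log (1 + P) / (P + Pstatic)
    StrictMonoOn EE (Set.Ioo 0 PEE) ∧ StrictAntiOn EE (Set.Ioi PEE) := by
  intro EE
  set g : ℝ → ℝ := fun P => (P + Pstatic) / (1 + P) - Real.log (1 + P) with hg
  -- g is strictly decreasing on [0, ∞)
  have hganti : StrictAntiOn g (Set.Ici 0) := by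
    apply strictAntiOn_of_deriv_neg (convex_Ici 0)
    · intro x hx
      have hx1 : (0:ℝ) < 1 + x := by
        simp only [Set.mem_Ici] at hx; linarith
      exact (hasDerivAt_g Pstatic x hx1).continuousAt.continuousWithinAt
    · intro x hx
      rw [interior_Ici] at hx
      have hx0 : 0 < x := hx
      have hx1 : (0:ℝ) < 1 + x := by linarith
      rw [(hasDerivAt_g Pstatic x hx1).deriv]
      have : 0 < (Pstatic + x) / (1 + x) ^ 2 := by positivity
      linarith
  have hgPEE : g PEE = 0 := by simp [hg, heq]
  -- deriv EE x = g x / (x+Pstatic)^2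
  have hderiv : ∀ x : ℝ, 0 < x →
      deriv EE x = g x / (x + Pstatic) ^ 2 := fun x hx =>
    (hasDerivAt_EE Pstatic x hPs hx).deriv
  constructor
  · apply strictMonoOn_of_deriv_pos (convex_Ioo 0 PEE)
    · intro x hx
      exact (hasDerivAt_EE Pstatic x hPs hx.1).continuousAt.continuousWithinAt
    · intro x hx
      rw [interior_Ioo] at hx
      rw [hderiv x hx.1]
      have hgx : 0 < g x := by
        have := hganti (le_of_lt hx.1) (le_of_lt (lt_trans hx.1 hx.2)) hx.2
        rwa [hgPEE] at this
      exact div_pos hgx (pow_pos (by linarith [hx.1]) 2)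
  · apply strictAntiOn_of_deriv_neg (convex_Ioi PEE)
    · intro x hx
      have hx0 : 0 < x := lt_trans hPEE hx
      exact (hasDerivAt_EE Pstatic x hPs hx0).continuousAt.continuousWithinAt
    · intro x hx
      rw [interior_Ioi] at hx
      have hx0 : 0 < x := lt_trans hPEE hx
      rw [hderiv x hx0]
      have hgx : g x < 0 := by
        have := hganti (le_of_lt hPEE) (le_of_lt hx0) hx
        rwa [hgPEE] at this
      have hd : 0 < (x + Pstatic) ^ 2 := by positivity
      exact div_neg_of_neg_of_pos hgx hd
end

section
/- For a, ξ, P_const > 0, the function φ(P) = a·(ξ·P + P_const)/(1 + a·P) - ξ·log(1 + a·P) is strictly decreasing on [0, ∞), positive at P = 0, and tends to -∞ as P → ∞; hence η_UB(P) = N·log(1 + a·P)/(ξ·P + P_const) has a unique maximizer on (0, ∞). -/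
open Filter in
/-- `φ(P) = a·(ξ·P + P_const)/(1 + a·P) - ξ·log(1 + a·P)` is strictly
decreasing on `[0, ∞)`, positive at `0`, tends to `-∞`; hence the EE upper
bound has a unique maximizer on `(0, ∞)`. -/
theorem eta_UB_unique_maximizer (N a ξ Pconst : ℝ)
    (hN : 0 < N) (ha : 0 < a) (hξ : 0 < ξ) (hPc : 0 < Pconst) :
    let φ : ℝ → ℝ := fun P =>
      a * (ξ * P + Pconst) / (1 + a * P) - ξ * Real.log (1 + a * P)
    let ηUB : ℝ → ℝ := fun P => N * Real.log (1 + a * P) / (ξ * P + Pconst)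
    StrictAntiOn φ (Set.Ici 0) ∧ 0 < φ 0 ∧ Tendsto φ atTop atBot ∧
    ∃! Pstar : ℝ, Pstar ∈ Set.Ioi (0 : ℝ) ∧
      ∀ P ∈ Set.Ioi (0 : ℝ), ηUB P ≤ ηUB Pstar := by
  intro φ ηUB
  -- basic positivity facts
  have hpos : ∀ P : ℝ, 0 ≤ P → (0:ℝ) < 1 + a * P := fun P hP => by nlinarith
  have hden : ∀ P : ℝ, 0 ≤ P → (0:ℝ) < ξ * P + Pconst := fun P hP => by nlinarith
  -- derivative of φ
  have hdφ : ∀ P : ℝ, 0 ≤ P →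
      HasDerivAt φ (-(a^2 * (Pconst + ξ * P)) / (1 + a * P)^2) P := by
    intro P hP
    have hne : (1 : ℝ) + a * P ≠ 0 := (hpos P hP).ne'
    have h1 : HasDerivAt (fun P : ℝ => 1 + a * P) a P := by
      simpa using ((hasDerivAt_id P).const_mul a).const_add 1
    have h2 : HasDerivAt (fun P : ℝ => a * (ξ * P + Pconst)) (a * ξ) P := by
      simpa using (((hasDerivAt_id P).const_mul ξ).add_const Pconst).const_mul a
    have h3 := h2.div h1 hne
    have h4 : HasDerivAt (fun P : ℝ => Real.log (1 + a * P)) ((1 + a * P)⁻¹ * a) P :=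
      by have := (Real.hasDerivAt_log hne).comp P h1; exact this
    have h5 := h3.sub (h4.const_mul ξ)
    refine h5.congr_deriv ?_
    field_simp
    ring
  have hcφ : ContinuousOn φ (Set.Ici 0) := fun P hP =>
    ((hdφ P hP).continuousAt).continuousWithinAt
  -- strict antitonicity of φ
  have hanti : StrictAntiOn φ (Set.Ici 0) := by
    apply strictAntiOn_of_deriv_neg (convex_Ici 0) hcφ
    intro x hx
    rw [interior_Ici] at hx
    have hx0 : (0:ℝ) ≤ x := le_of_lt hx
    rw [(hdφ x hx0).deriv]
    have h1 := hpos x hx0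
    have h3 : (0:ℝ) < a^2 * (Pconst + ξ * x) :=
      mul_pos (pow_pos ha 2) (by nlinarith)
    have h2 : (0:ℝ) < (1 + a * x)^2 := by positivity
    exact div_neg_of_neg_of_pos (by linarith) h2
  -- φ 0 > 0
  have hφ0 : φ 0 = a * Pconst := by simp [φ]
  have hφ0pos : 0 < φ 0 := by rw [hφ0]; positivity
  -- tendsto atBot
  have htop : Tendsto (fun P : ℝ => 1 + a * P) atTop atTop :=
    tendsto_atTop_add_const_left _ 1 (tendsto_id.const_mul_atTop ha)
  have hlog : Tendsto (fun P : ℝ => ξ * Real.log (1 + a * P)) atTop atTop :=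
    (Real.tendsto_log_atTop.comp htop).const_mul_atTop hξ
  have hbot : Tendsto φ atTop atBot := by
    have hbnd : Tendsto (fun P : ℝ => (ξ + a * Pconst) - ξ * Real.log (1 + a * P))
        atTop atBot := by
      simp only [sub_eq_add_neg]
      exact tendsto_atBot_add_const_left _ _ (tendsto_neg_atTop_atBot.comp hlog)
    apply tendsto_atBot_mono' atTop _ hbnd
    filter_upwards [eventually_ge_atTop (0:ℝ)] with P hP
    have h1 := hpos P hP
    have hfrac : a * (ξ * P + Pconst) / (1 + a * P) ≤ ξ + a * Pconst := by
      rw [div_le_iff₀ h1]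
      nlinarith [mul_nonneg (mul_nonneg ha.le ha.le) (mul_nonneg hPc.le hP)]
    simp only [φ]
    linarith
  refine ⟨hanti, hφ0pos, hbot, ?_⟩
  -- find a point where φ is negative
  obtain ⟨B, hφB, hB0⟩ :=
    ((hbot.eventually (eventually_lt_atBot (0:ℝ))).and (eventually_ge_atTop (0:ℝ))).exists
  -- zero of φ by IVT
  have hsub : Set.Icc (0:ℝ) B ⊆ Set.Ici 0 := Set.Icc_subset_Ici_self
  obtain ⟨Pstar, hPmem, hφP⟩ :
      ∃ Pstar ∈ Set.Icc (0:ℝ) B, φ Pstar = 0 := by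
    have := intermediate_value_Icc' hB0 (hcφ.mono hsub) (⟨hφB.le, hφ0pos.le⟩ :
      (0:ℝ) ∈ Set.Icc (φ B) (φ 0))
    obtain ⟨x, hx, hfx⟩ := this
    exact ⟨x, hx, hfx⟩
  have hPpos : 0 < Pstar := by
    rcases eq_or_lt_of_le hPmem.1 with h | h
    · exfalso; rw [← h] at hφP; linarith
    · exact h
  -- derivative of ηUB
  have hdη : ∀ P : ℝ, 0 ≤ P →
      HasDerivAt ηUB (N * φ P / (ξ * P + Pconst)^2) P := by
    intro P hP
    have hne : (1 : ℝ) + a * P ≠ 0 := (hpos P hP).ne'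
    have hdne : ξ * P + Pconst ≠ 0 := (hden P hP).ne'
    have h1 : HasDerivAt (fun P : ℝ => 1 + a * P) a P := by
      simpa using ((hasDerivAt_id P).const_mul a).const_add 1
    have h4 : HasDerivAt (fun P : ℝ => Real.log (1 + a * P)) ((1 + a * P)⁻¹ * a) P :=
      by have := (Real.hasDerivAt_log hne).comp P h1; exact this
    have h6 : HasDerivAt (fun P : ℝ => ξ * P + Pconst) ξ P := by
      simpa using ((hasDerivAt_id P).const_mul ξ).add_const Pconst
    have h7 := (h4.const_mul N).div h6 hdne
    refine h7.congr_deriv ?_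
    simp only [φ]
    field_simp
  have hcη : ContinuousOn ηUB (Set.Ici 0) := fun P hP =>
    ((hdη P hP).continuousAt).continuousWithinAt
  -- ηUB is strictly increasing on [0, Pstar]
  have hmono : StrictMonoOn ηUB (Set.Icc 0 Pstar) := by
    apply strictMonoOn_of_deriv_pos (convex_Icc 0 Pstar)
      (hcη.mono Set.Icc_subset_Ici_self)
    intro x hx
    rw [interior_Icc] at hx
    have hx0 : (0:ℝ) ≤ x := hx.1.le
    rw [(hdη x hx0).deriv]
    have hφx : 0 < φ x := by
      have := hanti (Set.mem_Ici.mpr hx0) (Set.mem_Ici.mpr hPmem.1) hx.2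
      linarith
    have := hden x hx0
    positivity
  -- ηUB is strictly decreasing on [Pstar, ∞)
  have hanti' : StrictAntiOn ηUB (Set.Ici Pstar) := by
    apply strictAntiOn_of_deriv_neg (convex_Ici Pstar)
      (hcη.mono (Set.Ici_subset_Ici.mpr hPpos.le))
    intro x hx
    rw [interior_Ici] at hx
    have hx0 : (0:ℝ) ≤ x := le_trans hPpos.le (le_of_lt hx)
    rw [(hdη x hx0).deriv]
    have hφx : φ x < 0 := by
      have := hanti (Set.mem_Ici.mpr hPmem.1) (Set.mem_Ici.mpr hx0) hx
      linarith
    have h1 := hden x hx0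
    apply div_neg_of_neg_of_pos _ (by positivity)
    nlinarith
  -- assemble
  have hmax : ∀ P ∈ Set.Ioi (0:ℝ), ηUB P ≤ ηUB Pstar := by
    intro P hP
    rcases le_total P Pstar with h | h
    · exact hmono.monotoneOn ⟨(Set.mem_Ioi.mp hP).le, h⟩
        ⟨hPpos.le, le_refl _⟩ h
    · exact hanti'.antitoneOn (Set.mem_Ici.mpr (le_refl _)) (Set.mem_Ici.mpr h) h
  refine ⟨Pstar, ⟨Set.mem_Ioi.mpr hPpos, hmax⟩, ?_⟩
  rintro Q ⟨hQ, hQmax⟩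
  have e1 : ηUB Pstar ≤ ηUB Q := hQmax Pstar (Set.mem_Ioi.mpr hPpos)
  have e2 : ηUB Q ≤ ηUB Pstar := hmax Q hQ
  rcases lt_trichotomy Q Pstar with h | h | h
  · have := hmono ⟨(Set.mem_Ioi.mp hQ).le, h.le⟩ ⟨hPpos.le, le_refl _⟩ h
    linarith
  · exact h
  · have := hanti' (Set.mem_Ici.mpr (le_refl _)) (Set.mem_Ici.mpr h.le) h
    linarith
end

section
/- With f as above (f(P) = log(1 + m²·P/(Γ·P + A)) - m²·A·(P + P_const/ξ)/(((m²+Γ)·P + A)·(Γ·P + A))), f is monotonically increasing on [0, ∞) and therefore the equation f(P) = 0 has a unique solution P_RZF > 0. -/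
open Real Filter Set Topology

/-- The RZF characterization function `f` is monotonically increasing on
`[0, ∞)` and `f(P) = 0` has a unique solution `P_RZF > 0`. -/
theorem rzf_f_monotone_unique_root (A Γ m Pconst ξ : ℝ)
    (hA : 0 < A) (hΓ : 0 < Γ) (hm : 0 < m) (hPc : 0 < Pconst) (hξ : 0 < ξ) :
    let f : ℝ → ℝ := fun P =>
      Real.log (1 + m ^ 2 * P / (Γ * P + A)) -
        m ^ 2 * A * (P + Pconst / ξ) / (((m ^ 2 + Γ) * P + A) * (Γ * P + A))
    StrictMonoOn f (Set.Ici 0) ∧ ∃! P : ℝ, 0 < P ∧ f P = 0 := by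
  intro f
  have hm2 : (0:ℝ) < m ^ 2 := by positivity
  set c : ℝ := Pconst / ξ with hcdef
  have hc0 : 0 < c := by positivity
  -- key derivative computation
  have key : ∀ x : ℝ, 0 ≤ x → HasDerivAt f
      (m ^ 2 * A * (x + c) * ((m ^ 2 + Γ) * (Γ * x + A) + ((m ^ 2 + Γ) * x + A) * Γ)
        / (((m ^ 2 + Γ) * x + A) * (Γ * x + A)) ^ 2) x := by
    intro x hx
    have hM : 0 < Γ * x + A := by nlinarith
    have hN : 0 < (m ^ 2 + Γ) * x + A := by nlinarith
    have hD : 0 < ((m ^ 2 + Γ) * x + A) * (Γ * x + A) := mul_pos hN hM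
    have h1q : 0 < 1 + m ^ 2 * x / (Γ * x + A) := by positivity
    have hM' : HasDerivAt (fun P : ℝ => Γ * P + A) Γ x := by
      simpa using ((hasDerivAt_id x).const_mul Γ).add_const A
    have hN' : HasDerivAt (fun P : ℝ => (m ^ 2 + Γ) * P + A) (m ^ 2 + Γ) x := by
      simpa using ((hasDerivAt_id x).const_mul (m ^ 2 + Γ)).add_const A
    have hq : HasDerivAt (fun P : ℝ => m ^ 2 * P / (Γ * P + A))
        ((m ^ 2 * (Γ * x + A) - m ^ 2 * x * Γ) / (Γ * x + A) ^ 2) x := by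
      have := (((hasDerivAt_id x).const_mul (m ^ 2)).div hM' hM.ne')
      simpa [Pi.div_def] using this
    have hlog : HasDerivAt (fun P : ℝ => Real.log (1 + m ^ 2 * P / (Γ * P + A)))
        (((m ^ 2 * (Γ * x + A) - m ^ 2 * x * Γ) / (Γ * x + A) ^ 2)
          / (1 + m ^ 2 * x / (Γ * x + A))) x :=
      (hq.const_add 1).log h1q.ne'
    have hnum : HasDerivAt (fun P : ℝ => m ^ 2 * A * (P + c)) (m ^ 2 * A) x := by
      simpa using ((hasDerivAt_id x).add_const c).const_mul (m ^ 2 * A)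
    have hden : HasDerivAt (fun P : ℝ => ((m ^ 2 + Γ) * P + A) * (Γ * P + A))
        ((m ^ 2 + Γ) * (Γ * x + A) + ((m ^ 2 + Γ) * x + A) * Γ) x := hN'.mul hM'
    have hg : HasDerivAt
        (fun P : ℝ => m ^ 2 * A * (P + c) / (((m ^ 2 + Γ) * P + A) * (Γ * P + A)))
        ((m ^ 2 * A * (((m ^ 2 + Γ) * x + A) * (Γ * x + A)) -
            m ^ 2 * A * (x + c) * ((m ^ 2 + Γ) * (Γ * x + A) + ((m ^ 2 + Γ) * x + A) * Γ))
          / (((m ^ 2 + Γ) * x + A) * (Γ * x + A)) ^ 2) x :=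
      hnum.div hden hD.ne'
    have := hlog.sub hg
    refine this.congr_deriv ?_
    have h1q' : 1 + m ^ 2 * x / (Γ * x + A) = ((m ^ 2 + Γ) * x + A) / (Γ * x + A) := by
      field_simp; ring
    rw [h1q']
    field_simp
    ring
  have cont : ContinuousOn f (Set.Ici 0) := fun x hx =>
    (key x hx).continuousAt.continuousWithinAt
  have mono : StrictMonoOn f (Set.Ici 0) := by
    apply strictMonoOn_of_deriv_pos (convex_Ici 0) cont
    intro x hx
    rw [interior_Ici] at hx
    have hx' : 0 < x := hx
    rw [(key x hx'.le).deriv]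
    have hM : 0 < Γ * x + A := by nlinarith
    have hN : 0 < (m ^ 2 + Γ) * x + A := by nlinarith
    have hxc : 0 < x + c := by linarith
    have hK : 0 < (m ^ 2 + Γ) * (Γ * x + A) + ((m ^ 2 + Γ) * x + A) * Γ := by positivity
    positivity
  refine ⟨mono, ?_⟩
  -- f 0 < 0
  have hf0 : f 0 < 0 := by
    have : f 0 = -(m ^ 2 * A * c / (A * A)) := by
      show Real.log (1 + m ^ 2 * 0 / (Γ * 0 + A)) -
        m ^ 2 * A * (0 + c) / (((m ^ 2 + Γ) * 0 + A) * (Γ * 0 + A)) = _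
      rw [mul_zero, zero_div, add_zero, Real.log_one]
      ring
    rw [this]
    have : 0 < m ^ 2 * A * c / (A * A) := by positivity
    linarith
  -- f tends to log (1 + m^2/Γ) > 0 at infinity
  have hLpos : 0 < Real.log (1 + m ^ 2 / Γ) :=
    Real.log_pos (by nlinarith [div_pos hm2 hΓ])
  have t1 : Tendsto (fun P : ℝ => m ^ 2 * P / (Γ * P + A)) atTop (𝓝 (m ^ 2 / Γ)) := by
    have heq : ∀ᶠ P : ℝ in atTop, m ^ 2 / (Γ + A / P) = m ^ 2 * P / (Γ * P + A) := by
      filter_upwards [eventually_gt_atTop 0] with P hP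
      have hM : 0 < Γ * P + A := by nlinarith
      field_simp
    have h0 : Tendsto (fun P : ℝ => A / P) atTop (𝓝 0) :=
      Tendsto.div_atTop tendsto_const_nhds tendsto_id
    have : Tendsto (fun P : ℝ => m ^ 2 / (Γ + A / P)) atTop (𝓝 (m ^ 2 / (Γ + 0))) :=
      tendsto_const_nhds.div (tendsto_const_nhds.add h0) (by simpa using hΓ.ne')
    rw [add_zero] at this
    exact this.congr' heq
  have t2 : Tendsto (fun P : ℝ =>
      m ^ 2 * A * (P + c) / (((m ^ 2 + Γ) * P + A) * (Γ * P + A))) atTop (𝓝 0) := by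
    have heq : ∀ᶠ P : ℝ in atTop,
        m ^ 2 * A * (1 / P + c / P ^ 2) / (((m ^ 2 + Γ) + A / P) * (Γ + A / P)) =
        m ^ 2 * A * (P + c) / (((m ^ 2 + Γ) * P + A) * (Γ * P + A)) := by
      filter_upwards [eventually_gt_atTop 0] with P hP
      have hM : 0 < Γ * P + A := by nlinarith
      have hN : 0 < (m ^ 2 + Γ) * P + A := by nlinarith
      have hq : 0 < ((m ^ 2 + Γ) + A / P) * (Γ + A / P) := by positivity
      rw [div_eq_div_iff hq.ne' (mul_pos hN hM).ne']
      field_simp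
    have h0 : Tendsto (fun P : ℝ => A / P) atTop (𝓝 0) :=
      Tendsto.div_atTop tendsto_const_nhds tendsto_id
    have h1 : Tendsto (fun P : ℝ => 1 / P) atTop (𝓝 0) :=
      Tendsto.div_atTop tendsto_const_nhds tendsto_id
    have h2 : Tendsto (fun P : ℝ => c / P ^ 2) atTop (𝓝 0) :=
      Tendsto.div_atTop tendsto_const_nhds (tendsto_pow_atTop (by norm_num))
    have hden : Tendsto (fun P : ℝ => ((m ^ 2 + Γ) + A / P) * (Γ + A / P)) atTop
        (𝓝 (((m ^ 2 + Γ) + 0) * (Γ + 0))) :=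
      (tendsto_const_nhds.add h0).mul (tendsto_const_nhds.add h0)
    have hdenne : ((m ^ 2 + Γ) + 0) * (Γ + 0) ≠ 0 := by positivity
    have h3 : Tendsto (fun P : ℝ =>
        m ^ 2 * A * (1 / P + c / P ^ 2) / ((m ^ 2 + Γ + A / P) * (Γ + A / P))) atTop
        (𝓝 (m ^ 2 * A * (0 + 0) / ((m ^ 2 + Γ + 0) * (Γ + 0)))) :=
      ((tendsto_const_nhds (x := m ^ 2 * A)).mul (h1.add h2)).div hden hdenne
    simp only [add_zero, mul_zero, zero_div] at h3
    exact h3.congr' heq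
  have hflim : Tendsto f atTop (𝓝 (Real.log (1 + m ^ 2 / Γ) - 0)) := by
    have hlog : Tendsto (fun P : ℝ => Real.log (1 + m ^ 2 * P / (Γ * P + A))) atTop
        (𝓝 (Real.log (1 + m ^ 2 / Γ))) :=
      (tendsto_const_nhds.add t1).log (by positivity)
    exact hlog.sub t2
  rw [sub_zero] at hflim
  have hev : ∀ᶠ P : ℝ in atTop, 0 < f P ∧ 0 < P :=
    (hflim.eventually (eventually_gt_nhds hLpos)).and (eventually_gt_atTop 0)
  obtain ⟨P₁, hfP₁, hP₁⟩ := hev.exists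
  -- intermediate value
  have hsub : Set.Icc (0:ℝ) P₁ ⊆ Set.Ici 0 := fun y hy => hy.1
  have hivt := intermediate_value_Ioo hP₁.le (cont.mono hsub)
  have h0mem : (0:ℝ) ∈ Set.Ioo (f 0) (f P₁) := ⟨hf0, hfP₁⟩
  obtain ⟨P, hPmem, hfP⟩ := hivt h0mem
  refine ⟨P, ⟨hPmem.1, hfP⟩, ?_⟩
  intro Q hQ
  exact mono.injOn (le_of_lt hQ.1) (le_of_lt hPmem.1) (hQ.2.trans hfP.symm)
end
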